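/- arXiv:2409.03169 — 2 statements merged into one kernel-verified Lean document; each statement's English description precedes it below -/
import Mathlib

section
/- The rewriting relation of the conditional-swap transducer is strongly normalizing on configurations, and for every input tree t the configuration q0⟨t⟩ has a unique normal form, namely emb(f t): if q0⟨t⟩ →* d and d admits no further rewriting step, then d = emb(f t). -/
/-- Trees over the ranked alphabet {a:2, b:1, c:0}. -/
inductive T : Type
  | a : T → T → T
  | b : T → T
  | c : T

/-- The conditional-swap function. -/
def f : T → T
  | T.a t u => T.a (f u) (f t)
  | T.b t => T.b t
  | T.c => T.c

/-- Configurations of the conditional-swap top-down tree transducer. -/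
inductive C : Type
  | a : C → C → C
  | b : C → C
  | c : C
  | Q0 : T → C
  | Q1 : T → C

/-- The embedding of pure output trees into configurations. -/
def emb : T → C
  | T.a t u => C.a (emb t) (emb u)
  | T.b t => C.b (emb t)
  | T.c => C.c

/-- One-step rewriting: congruence closure (w.r.t. the constructors `a` and `b`
of `C`) of the transducer rules. -/
inductive Step : C → C → Prop
  | q0a (t u : T) : Step (C.Q0 (T.a t u)) (C.a (C.Q0 u) (C.Q0 t))
  | q1a (t u : T) : Step (C.Q1 (T.a t u)) (C.a (C.Q1 t) (C.Q1 u))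
  | q0b (t : T) : Step (C.Q0 (T.b t)) (C.b (C.Q1 t))
  | q1b (t : T) : Step (C.Q1 (T.b t)) (C.b (C.Q1 t))
  | q0c : Step (C.Q0 T.c) C.c
  | q1c : Step (C.Q1 T.c) C.c
  | congL {d d' : C} (e : C) : Step d d' → Step (C.a d e) (C.a d' e)
  | congR (d : C) {e e' : C} : Step e e' → Step (C.a d e) (C.a d e')
  | congB {d d' : C} : Step d d' → Step (C.b d) (C.b d')

def sz : T → ℕ
  | T.a t u => sz t + sz u + 1
  | T.b t => sz t + 1
  | T.c => 1

def w : C → ℕ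
  | C.a d e => w d + w e + 1
  | C.b d => w d + 1
  | C.c => 0
  | C.Q0 t => 2 * sz t
  | C.Q1 t => 2 * sz t

lemma step_lt {d e : C} (h : Step d e) : w e < w d := by
  induction h <;> simp [w, sz] <;> omega

def evalC : C → T
  | C.a d e => T.a (evalC d) (evalC e)
  | C.b d => T.b (evalC d)
  | C.c => T.c
  | C.Q0 t => f t
  | C.Q1 t => t

lemma step_eval {d e : C} (h : Step d e) : evalC e = evalC d := by
  induction h <;> simp_all [evalC, f]

lemma nf_emb (d : C) (h : ∀ e : C, ¬ Step d e) : d = emb (evalC d) := by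
  induction d with
  | a d e ihd ihe =>
    rw [evalC, emb, ← ihd (fun x hx => h _ (Step.congL _ hx)),
        ← ihe (fun x hx => h _ (Step.congR _ hx))]
  | b d ihd => rw [evalC, emb, ← ihd (fun x hx => h _ (Step.congB hx))]
  | c => rfl
  | Q0 t =>
    cases t with
    | a t u => exact absurd (Step.q0a t u) (h _)
    | b t => exact absurd (Step.q0b t) (h _)
    | c => exact absurd Step.q0c (h _)
  | Q1 t =>
    cases t with
    | a t u => exact absurd (Step.q1a t u) (h _)
    | b t => exact absurd (Step.q1b t) (h _)
    | c => exact absurd Step.q1c (h _)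

/-- The rewriting relation is strongly normalizing (there is no infinite
sequence of rewriting steps, i.e. the converse relation is well-founded), and
for every input tree `t` the configuration `q0⟨t⟩` has the unique normal form
`emb (f t)`. -/
theorem conditional_swap_SN_and_unique_normal_form :
    (WellFounded fun d e : C => Step e d) ∧
    ∀ (t : T) (d : C), Relation.ReflTransGen Step (C.Q0 t) d →
      (∀ e : C, ¬ Step d e) → d = emb (f t) := by
  constructor
  · exact Subrelation.wf (fun h => step_lt h) (measure w).wf
  · intro t d hr hnf
    have he : evalC d = f t := by
      clear hnf
      induction hr with
      | refl => rfl
      | tail _ hstep ih => rw [step_eval hstep, ih]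
    rw [nf_emb d hnf, he]
end

section
/- The output of the quadratic-growth transducer has size exactly quadratic in the input size: for every natural number n, 2 · size(G(n)) = n² + 5n + 2, where size counts the number of nodes of a tree; in particular size(G(n)) is not O(n), so this top-down tree transducer does not have linear growth. -/
/-- The number of nodes of a tree. -/
def size : T → ℕ
  | T.c => 1
  | T.b t => 1 + size t
  | T.a t u => 1 + size t + size u

/-- `bpow k = b^k(c)`. -/
def bpow : ℕ → T
  | 0 => T.c
  | k + 1 => T.b (bpow k)

/-- `G n`, the output of the quadratic-growth transducer on input `S^n(0)`. -/
def G : ℕ → T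
  | 0 => T.c
  | n + 1 => T.a (bpow (n + 1)) (G n)

lemma size_bpow (k : ℕ) : size (bpow k) = k + 1 := by
  induction k with
  | zero => rfl
  | succ k ih => simp [bpow, size, ih]; omega

lemma key (n : ℕ) : 2 * size (G n) = n ^ 2 + 5 * n + 2 := by
  induction n with
  | zero => rfl
  | succ n ih => simp [G, size, size_bpow]; ring_nf; ring_nf at ih; omega

/-- The output size is exactly quadratic: `2 · size (G n) = n² + 5n + 2`;
in particular `size (G n)` is not `O(n)`, so this top-down tree transducer
does not have linear growth. -/
theorem quadratic_growth :
    (∀ n : ℕ, 2 * size (G n) = n ^ 2 + 5 * n + 2) ∧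
    ¬ (fun n : ℕ => (size (G n) : ℝ)) =O[Filter.atTop] (fun n : ℕ => (n : ℝ)) := by
  refine ⟨key, ?_⟩
  intro h
  rw [Asymptotics.isBigO_iff] at h
  obtain ⟨C, hC⟩ := h
  rw [Filter.eventually_atTop] at hC
  obtain ⟨N, hN⟩ := hC
  -- pick n large: n = N + ⌈2C⌉ + 1
  set n := N + 2 * ⌈C⌉₊ + 1 with hn
  have h1 := hN n (by omega)
  have h2 : (size (G n) : ℝ) ≥ n ^ 2 / 2 := by
    have := key n
    have : (2 : ℝ) * size (G n) = (n : ℝ) ^ 2 + 5 * n + 2 := by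
      exact_mod_cast this
    nlinarith [Nat.cast_nonneg (α := ℝ) n]
  have h3 : ‖(size (G n) : ℝ)‖ = (size (G n) : ℝ) := Real.norm_natCast _
  have h4 : ‖(n : ℝ)‖ = (n : ℝ) := Real.norm_natCast _
  rw [h3, h4] at h1
  have hCn : C ≤ ⌈C⌉₊ := Nat.le_ceil C
  have hnn : 2 * ((⌈C⌉₊ : ℝ)) + 1 ≤ (n : ℝ) := by
    have : 2 * ⌈C⌉₊ + 1 ≤ n := by omega
    exact_mod_cast this
  have hn1 : (1 : ℝ) ≤ n := by
    have : 1 ≤ n := by omega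
    exact_mod_cast this
  nlinarith [Nat.cast_nonneg (α := ℝ) ⌈C⌉₊]
end
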